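/- K-coalescing preserves snapshot equivalence: for every temporal K-element 𝒯 we have 𝒯 ~ coal(𝒯), i.e., τ_T(coal(𝒯)) = τ_T(𝒯) for every time point T. -/
import Mathlib


open scoped Classical

namespace TemporalK

variable {K : Type*}

/-- An interval over the time domain `{0, ..., N-1}`: a pair `(b, e)` with `b < e ≤ N`. -/
abbrev TInterval (N : ℕ) := {I : Fin (N + 1) × Fin (N + 1) // I.1 < I.2}

/-- A temporal `K`-element: a function assigning to each interval an element of `K`. -/
abbrev TempEl (N : ℕ) (K : Type*) := TInterval N → K

/-- The interval `I = (b, e)` contains the time point `T` iff `b ≤ T < e`. -/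
def Contains {N : ℕ} (I : TInterval N) (T : ℕ) : Prop :=
  (I.val.1 : ℕ) ≤ T ∧ T < (I.val.2 : ℕ)

/-- The timeslice of `𝒯` at time point `T`: the sum of `𝒯 I` over all intervals `I`
containing `T`. -/
noncomputable def slice {N : ℕ} [CommSemiring K] (𝒯 : TempEl N K) (T : ℕ) : K :=
  ∑ I ∈ Finset.univ.filter (fun I : TInterval N => Contains I T), 𝒯 I

/-- `T` is an (annotation) changepoint of `𝒯` iff `T = 0` or the timeslices at `T - 1`
and `T` differ. -/
def Changepoint {N : ℕ} [CommSemiring K] (𝒯 : TempEl N K) (T : ℕ) : Prop :=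
  T = 0 ∨ slice 𝒯 (T - 1) ≠ slice 𝒯 T

/-- `I = (b, e)` is a changepoint interval of `𝒯` iff `b` is a changepoint, `e` is a
changepoint or equals `N`, and no time point strictly between `b` and `e` is a changepoint. -/
def CPInterval {N : ℕ} [CommSemiring K] (𝒯 : TempEl N K) (I : TInterval N) : Prop :=
  Changepoint 𝒯 (I.val.1 : ℕ) ∧
    (Changepoint 𝒯 (I.val.2 : ℕ) ∨ (I.val.2 : ℕ) = N) ∧
    ∀ T : ℕ, (I.val.1 : ℕ) < T → T < (I.val.2 : ℕ) → ¬ Changepoint 𝒯 T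

/-- `K`-coalescing: maps changepoint intervals `(b, e)` to the timeslice at `b` and all
other intervals to `0`. -/
noncomputable def coal {N : ℕ} [CommSemiring K] (𝒯 : TempEl N K) : TempEl N K :=
  fun I => if CPInterval 𝒯 I then slice 𝒯 (I.val.1 : ℕ) else 0

/-- Snapshot equivalence: equal timeslices at every time point. -/
def SnapEq {N : ℕ} [CommSemiring K] (k k' : TempEl N K) : Prop :=
  ∀ T : ℕ, T < N → slice k T = slice k' T

/-- A temporal `K`-element is coalesced iff it is the `K`-coalescing of some
temporal `K`-element. -/
def Coalesced {N : ℕ} [CommSemiring K] (k : TempEl N K) : Prop :=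
  ∃ 𝒯 : TempEl N K, k = coal 𝒯

/-- Pointwise addition of temporal `K`-elements. -/
def padd {N : ℕ} [CommSemiring K] (k k' : TempEl N K) : TempEl N K :=
  fun I => k I + k' I

/-- Pointwise multiplication of temporal `K`-elements:
`(k ·_P k')(I) = Σ k(I')·k'(I'')` over all pairs `(I', I'')` whose intersection is
nonempty and equals `I`. -/
noncomputable def pmul {N : ℕ} [CommSemiring K] (k k' : TempEl N K) : TempEl N K :=
  fun I =>
    ∑ p ∈ Finset.univ.filter (fun p : TInterval N × TInterval N =>
        max (p.1.val.1 : ℕ) (p.2.val.1 : ℕ) < min (p.1.val.2 : ℕ) (p.2.val.2 : ℕ) ∧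
        (I.val.1 : ℕ) = max (p.1.val.1 : ℕ) (p.2.val.1 : ℕ) ∧
        (I.val.2 : ℕ) = min (p.1.val.2 : ℕ) (p.2.val.2 : ℕ)),
      k p.1 * k' p.2

/-- Addition of the period semiring: coalesced pointwise addition. -/
noncomputable def tadd {N : ℕ} [CommSemiring K] (k k' : TempEl N K) : TempEl N K :=
  coal (padd k k')

/-- Multiplication of the period semiring: coalesced pointwise multiplication. -/
noncomputable def tmul {N : ℕ} [CommSemiring K] (k k' : TempEl N K) : TempEl N K :=
  coal (pmul k k')

/-- The zero of the period semiring: maps every interval to `0`. -/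
def zeroT (N : ℕ) (K : Type*) [CommSemiring K] : TempEl N K := fun _ => 0

/-- The one of the period semiring: maps the interval `(0, N)` to `1` and every other
interval to `0`. -/
def oneT (N : ℕ) (K : Type*) [CommSemiring K] : TempEl N K :=
  fun I => if (I.val.1 : ℕ) = 0 ∧ (I.val.2 : ℕ) = N then 1 else 0

/-- Encoding of an annotation history `f : time points → K` as a coalesced temporal
`K`-element: coalesce the element assigning `f T` to each singleton interval `(T, T+1)`. -/
noncomputable def enc {N : ℕ} [CommSemiring K] (f : Fin N → K) : TempEl N K :=
  coal (fun I =>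
    if h : (I.val.2 : ℕ) = (I.val.1 : ℕ) + 1 then
      f ⟨(I.val.1 : ℕ), by have := I.val.2.isLt; omega⟩
    else 0)

/-- The natural preorder of the semiring `K`. -/
def nle [CommSemiring K] (a b : K) : Prop := ∃ c, a + c = b

/-- The natural preorder of the period semiring (on coalesced temporal `K`-elements). -/
def tle {N : ℕ} [CommSemiring K] (k k' : TempEl N K) : Prop :=
  ∃ k'' : TempEl N K, Coalesced k'' ∧ tadd k k'' = k'

/-- The pointwise monus: assigns `τ_T(k) −_K τ_T(k')` to each singleton interval
`(T, T+1)` and `0` to every non-singleton interval. -/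
noncomputable def pmonus {N : ℕ} [CommSemiring K] (monus : K → K → K)
    (k k' : TempEl N K) : TempEl N K :=
  fun I =>
    if (I.val.2 : ℕ) = (I.val.1 : ℕ) + 1 then
      monus (slice k (I.val.1 : ℕ)) (slice k' (I.val.1 : ℕ))
    else 0

/-- The monus of the period semiring: coalesced pointwise monus. -/
noncomputable def tmonus {N : ℕ} [CommSemiring K] (monus : K → K → K)
    (k k' : TempEl N K) : TempEl N K :=
  coal (pmonus monus k k')

end TemporalK

open TemporalK

theorem coal_snapshot_equiv {N : ℕ} (hN : 1 ≤ N) {K : Type*} [CommSemiring K]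
    (𝒯 : TempEl N K) :
    SnapEq 𝒯 (coal 𝒯) ∧ ∀ T : ℕ, T < N → slice (coal 𝒯) T = slice 𝒯 T := by
  have const : ∀ t b : ℕ, b ≤ t → (∀ s, b < s → s ≤ t → ¬ Changepoint 𝒯 s) →
      slice 𝒯 b = slice 𝒯 t := by
    intro t
    induction t with
    | zero => intro b h _; interval_cases b; rfl
    | succ t ih =>
      intro b hb hno
      rcases Nat.lt_or_ge b (t + 1) with h | h
      · have h1 : slice 𝒯 b = slice 𝒯 t :=
          ih b (by omega) (fun s hs1 hs2 => hno s hs1 (by omega))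
        have h2 : ¬ Changepoint 𝒯 (t + 1) := hno (t + 1) (by omega) le_rfl
        simp only [Changepoint, not_or, not_not] at h2
        have h3 := h2.2
        simp only [Nat.add_sub_cancel] at h3
        rw [h1, h3]
      · have hbe : b = t + 1 := by omega
        rw [hbe]
  have main : ∀ T : ℕ, T < N → slice (coal 𝒯) T = slice 𝒯 T := by
    intro T hT
    set b := Nat.findGreatest (Changepoint 𝒯) T with hbdef
    have hb_cp : Changepoint 𝒯 b :=
      Nat.findGreatest_spec (Nat.zero_le T) (Or.inl rfl)
    have hb_le : b ≤ T := Nat.findGreatest_le T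
    have hno_left : ∀ s, b < s → s ≤ T → ¬ Changepoint 𝒯 s := by
      intro s h1 h2
      exact Nat.findGreatest_is_greatest h1 h2
    have he_ex : ∃ s, T < s ∧ s ≤ N ∧ (Changepoint 𝒯 s ∨ s = N) :=
      ⟨N, hT, le_rfl, Or.inr rfl⟩
    set e := Nat.find he_ex with hedef
    obtain ⟨he_gt, he_le, he_cp⟩ := Nat.find_spec he_ex
    have hno_right : ∀ s, T < s → s < e → ¬ Changepoint 𝒯 s := by
      intro s h1 h2 hcp
      exact Nat.find_min he_ex h2 ⟨h1, by omega, Or.inl hcp⟩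
    have hbN : b < N + 1 := by omega
    have heN : e < N + 1 := by omega
    set I0 : TInterval N := ⟨(⟨b, hbN⟩, ⟨e, heN⟩), by
      simp only [Fin.mk_lt_mk]; omega⟩ with hI0def
    have hI0cp : CPInterval 𝒯 I0 := by
      refine ⟨hb_cp, he_cp, ?_⟩
      intro s hs1 hs2
      rcases Nat.lt_or_ge T s with h | h
      · exact hno_right s h hs2
      · exact hno_left s hs1 h
    have huniq : ∀ I : TInterval N, Contains I T → CPInterval 𝒯 I → I = I0 := by
      intro I hcont hcp
      obtain ⟨hc1, hc2, hc3⟩ := hcp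
      obtain ⟨hl, hr⟩ := hcont
      have hIe_le : (I.val.2 : ℕ) ≤ N := by omega
      have h1 : (I.val.1 : ℕ) = b := by
        by_contra hne
        rcases Nat.lt_or_ge (I.val.1 : ℕ) b with h | h
        · exact hc3 b h (by omega) hb_cp
        · exact hno_left (I.val.1 : ℕ) (by omega) hl hc1
      have h2 : (I.val.2 : ℕ) = e := by
        by_contra hne
        rcases Nat.lt_or_ge (I.val.2 : ℕ) e with h | h
        · exact Nat.find_min he_ex h ⟨hr, hIe_le, hc2⟩
        · have hee : e < (I.val.2 : ℕ) := by omega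
          rcases he_cp with hcp | hcpN
          · exact hc3 e (by omega) hee hcp
          · omega
      apply Subtype.ext
      apply Prod.ext <;> apply Fin.ext <;> simp [hI0def, h1, h2]
    have hmem : I0 ∈ Finset.univ.filter (fun I : TInterval N => Contains I T) := by
      simp only [Finset.mem_filter, Finset.mem_univ, true_and]
      exact ⟨hb_le, he_gt⟩
    have hsum : slice (coal 𝒯) T = coal 𝒯 I0 := by
      unfold TemporalK.slice
      apply Finset.sum_eq_single_of_mem I0 hmem
      intro I hI hne
      simp only [Finset.mem_filter, Finset.mem_univ, true_and] at hI
      unfold TemporalK.coal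
      split
      · exact absurd (huniq I hI ‹_›) hne
      · rfl
    rw [hsum]
    have : coal 𝒯 I0 = slice 𝒯 b := by
      unfold TemporalK.coal; rw [if_pos hI0cp]
    rw [this]
    exact const T b hb_le hno_left
  exact ⟨fun T hT => (main T hT).symm, main⟩
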